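/- Let σ > 0 and c > 0, let t = (c/(σ·√(2π))) · exp(−c²/(2σ²)), and let δ be a real with 0 ≤ δ ≤ t. Let γ be the Gaussian probability measure on ℝ with mean 0 and variance σ², and set p = γ((−∞, c)). Then 0 < p − δ, 0 < 1 − p, and ln((p − δ)/(1 − p)) ≥ 4·(t − δ). -/

import Mathlib

open MeasureTheory Real

private lemma aux_log_bound {x : ℝ} (hx0 : 0 ≤ x) (hx1 : x ≤ 1/2) :
    2 * x ≤ Real.log ((1 + x) / (1 - x)) := by
  have h1 : (0:ℝ) < 1 - x := by linarith
  have h2 : (0:ℝ) < 1 + x := by linarith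
  rw [Real.le_log_iff_exp_le (by positivity), le_div_iff₀ h1]
  have hb := Real.exp_bound' (x := 2*x) (by linarith) (by linarith) (n := 3) (by norm_num)
  have hs : (∑ m ∈ Finset.range 3, (2*x) ^ m / m.factorial) = 1 + 2*x + 2*x^2 := by
    simp [Finset.sum_range_succ]
    ring
  rw [hs] at hb
  norm_num [Nat.factorial] at hb
  have hb' := mul_le_mul_of_nonneg_right hb h1.le
  nlinarith [pow_nonneg hx0 3, pow_nonneg hx0 4, hb']

private lemma aux_sup {u : ℝ} (hu : 0 ≤ u) :
    u * Real.exp (-u^2/2) ≤ Real.exp (-(1:ℝ)/2) := by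
  have h : u ≤ Real.exp (u^2/2 - 1/2) := by
    have := Real.add_one_le_exp (u^2/2 - 1/2)
    nlinarith [sq_nonneg (u - 1)]
  calc u * Real.exp (-u^2/2) ≤ Real.exp (u^2/2 - 1/2) * Real.exp (-u^2/2) :=
        mul_le_mul_of_nonneg_right h (Real.exp_nonneg _)
    _ = Real.exp (-(1:ℝ)/2) := by rw [← Real.exp_add]; ring_nf

private lemma aux_quarter : Real.exp (-(1:ℝ)/2) ≤ Real.sqrt (2*π) / 4 := by
  have hπ := Real.pi_gt_d6
  have he := Real.exp_one_gt_d9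
  have hepos := Real.exp_pos 1
  have hsq : ((4:ℝ) * Real.exp (-(1:ℝ)/2))^2 ≤ 2*π := by
    have h2 : Real.exp (-(1:ℝ)/2) * Real.exp (-(1:ℝ)/2) = Real.exp (-1) := by
      rw [← Real.exp_add]; norm_num
    have h3 : Real.exp (-1) = (Real.exp 1)⁻¹ := Real.exp_neg 1
    have h4 : (16:ℝ) * (Real.exp 1)⁻¹ ≤ 2*π := by
      rw [mul_inv_le_iff₀ hepos]
      nlinarith
    calc ((4:ℝ) * Real.exp (-(1:ℝ)/2))^2 = 16 * (Real.exp (-(1:ℝ)/2) * Real.exp (-(1:ℝ)/2)) := by ring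
      _ = 16 * (Real.exp 1)⁻¹ := by rw [h2, h3]
      _ ≤ 2*π := h4
  have h5 : (4:ℝ) * Real.exp (-(1:ℝ)/2) ≤ Real.sqrt (2*π) := by
    have := Real.sqrt_le_sqrt hsq
    rwa [Real.sqrt_sq (by positivity)] at this
  linarith

private lemma gauss_pdf_anti {v : NNReal} (hv : v ≠ 0) {x y : ℝ} (hx : 0 ≤ x) (hxy : x ≤ y) :
    ProbabilityTheory.gaussianPDFReal 0 v y ≤ ProbabilityTheory.gaussianPDFReal 0 v x := by
  have hv' : (0:ℝ) < (v:ℝ) := by exact_mod_cast pos_iff_ne_zero.mpr hv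
  simp only [ProbabilityTheory.gaussianPDFReal, sub_zero]
  refine mul_le_mul_of_nonneg_left (Real.exp_le_exp.mpr ?_) (by positivity)
  rw [div_le_div_iff₀ (by linarith) (by linarith)]
  have h1 : x^2 ≤ y^2 := by nlinarith
  have h2 : (0:ℝ) ≤ 2*(v:ℝ) := by linarith
  nlinarith [mul_le_mul_of_nonneg_right h1 h2]

/-- Quantitative privacy lower bound for the output-perturbation mechanism: with
`t = (c/(σ√(2π)))·exp(−c²/(2σ²))`, `0 ≤ δ ≤ t`, and `p = γ((−∞, c))` the success
probability of the optimal distinguisher under `γ = N(0, σ²)`, we have `p − δ > 0`,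
`1 − p > 0`, and `ln((p − δ)/(1 − p)) ≥ 4(t − δ)`. -/
theorem stmt_14 (σ c : ℝ) (hσ : 0 < σ) (hc : 0 < c)
    (t : ℝ) (ht : t = c / (σ * Real.sqrt (2 * π)) * Real.exp (-c ^ 2 / (2 * σ ^ 2)))
    (δ : ℝ) (hδ0 : 0 ≤ δ) (hδt : δ ≤ t)
    (p : ℝ) (hp : p = ((ProbabilityTheory.gaussianReal 0 (σ ^ 2).toNNReal) (Set.Iio c)).toReal) :
    0 < p - δ ∧ 0 < 1 - p ∧ 4 * (t - δ) ≤ Real.log ((p - δ) / (1 - p)) := by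
  have hvv : ((σ ^ 2).toNNReal : ℝ) = σ ^ 2 := Real.coe_toNNReal _ (sq_nonneg σ)
  have hv0 : (σ ^ 2).toNNReal ≠ 0 := by
    rw [ne_eq, Real.toNNReal_eq_zero, not_le]
    positivity
  set f : ℝ → ℝ := ProbabilityTheory.gaussianPDFReal 0 (σ ^ 2).toNNReal with hf_def
  have hfint : Integrable f volume := ProbabilityTheory.integrable_gaussianPDFReal 0 _
  have hfnn : ∀ x, 0 ≤ f x := fun x => ProbabilityTheory.gaussianPDFReal_nonneg 0 _ x
  have hp' : p = ∫ x in Set.Iio c, f x := by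
    rw [hp, ProbabilityTheory.gaussianReal_apply_eq_integral 0 hv0,
      ENNReal.toReal_ofReal (setIntegral_nonneg measurableSet_Iio (fun x _ => hfnn x))]
  have hfeven : ∀ x, f (-x) = f x := by
    intro x
    simp [hf_def, ProbabilityTheory.gaussianPDFReal, neg_sq]
  have hone : ∫ x, f x = 1 := ProbabilityTheory.integral_gaussianPDFReal_eq_one 0 hv0
  -- symmetry: integral over Iio 0 is 1/2
  have hIio0 : ∫ x in Set.Iio (0:ℝ), f x = 1/2 := by
    have htot : (∫ x in Set.Iio (0:ℝ), f x) + ∫ x in Set.Ici (0:ℝ), f x = 1 := by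
      rw [← setIntegral_union (Set.Iio_disjoint_Ici le_rfl) measurableSet_Ici
        hfint.integrableOn hfint.integrableOn, Set.Iio_union_Ici, setIntegral_univ, hone]
    have hsym : ∫ x in Set.Ici (0:ℝ), f x = ∫ x in Set.Iio (0:ℝ), f x := by
      rw [integral_Ici_eq_integral_Ioi]
      calc ∫ x in Set.Ioi (0:ℝ), f x = ∫ x in Set.Ioi (0:ℝ), f (-x) := by simp_rw [hfeven]
        _ = ∫ x in Set.Iic (-(0:ℝ)), f x := integral_comp_neg_Ioi 0 f
        _ = ∫ x in Set.Iio (0:ℝ), f x := by rw [neg_zero, integral_Iic_eq_integral_Iio]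
    linarith
  -- t = c * f c
  have hfc : t = c * f c := by
    rw [ht]
    simp only [hf_def, ProbabilityTheory.gaussianPDFReal, hvv, sub_zero]
    rw [show Real.sqrt (2 * π * σ^2) = σ * Real.sqrt (2*π) from by
      rw [mul_comm (2*π) (σ^2), Real.sqrt_mul (sq_nonneg σ), Real.sqrt_sq hσ.le]]
    rw [div_eq_mul_inv]
    ring
  -- lower bound for p
  have hlow : 1/2 + t ≤ p := by
    have hsplit : (∫ x in Set.Iio c, f x)
        = (∫ x in Set.Iio (0:ℝ), f x) + ∫ x in Set.Ico 0 c, f x := by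
      rw [← setIntegral_union ((Set.Iio_disjoint_Ici le_rfl).mono_right
        Set.Ico_subset_Ici_self) measurableSet_Ico hfint.integrableOn hfint.integrableOn,
        Set.Iio_union_Ico_eq_Iio hc.le]
    have hIco : f c * c ≤ ∫ x in Set.Ico 0 c, f x := by
      have hμs : volume (Set.Ico (0:ℝ) c) ≠ ⊤ := by
        rw [Real.volume_Ico]; exact ENNReal.ofReal_ne_top
      have h := setIntegral_ge_of_const_le_real (μ := volume) measurableSet_Ico hμs
        (fun x hx => gauss_pdf_anti hv0 hx.1 hx.2.le) hfint.integrableOn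
      rwa [measureReal_def, Real.volume_Ico, sub_zero, ENNReal.toReal_ofReal hc.le] at h
    rw [hp', hsplit, hIio0, hfc]
    linarith [hIco]
  -- tail is positive
  have htot2 : p + ∫ x in Set.Ici c, f x = 1 := by
    rw [hp', ← setIntegral_union (Set.Iio_disjoint_Ici le_rfl) measurableSet_Ici
      hfint.integrableOn hfint.integrableOn, Set.Iio_union_Ici, setIntegral_univ, hone]
  have hpos_tail : 0 < ∫ x in Set.Ici c, f x := by
    have h1 : f (c+1) * 1 ≤ ∫ x in Set.Ico c (c+1), f x := by
      have hμs : volume (Set.Ico c (c+1)) ≠ ⊤ := by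
        rw [Real.volume_Ico]; exact ENNReal.ofReal_ne_top
      have h := setIntegral_ge_of_const_le_real (μ := volume) measurableSet_Ico hμs
        (fun x hx => gauss_pdf_anti hv0 (le_trans hc.le hx.1) hx.2.le) hfint.integrableOn
      have hv1 : ((volume (Set.Ico c (c+1))).toReal) = 1 := by
        rw [Real.volume_Ico, ENNReal.toReal_ofReal (by linarith)]
        ring
      rwa [measureReal_def, hv1] at h
    have h2 : (∫ x in Set.Ico c (c+1), f x) ≤ ∫ x in Set.Ici c, f x :=
      setIntegral_mono_set hfint.integrableOn (ae_of_all _ hfnn)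
        (HasSubset.Subset.eventuallyLE Set.Ico_subset_Ici_self)
    have h3 : 0 < f (c+1) := ProbabilityTheory.gaussianPDFReal_pos 0 _ (c+1) hv0
    linarith
  have hb : 0 < 1 - p := by
    have : 1 - p = ∫ x in Set.Ici c, f x := by linarith
    rw [this]; exact hpos_tail
  -- t ≤ 1/4
  have hsqpos : 0 < Real.sqrt (2*π) := Real.sqrt_pos.mpr (by positivity)
  have ht4 : t ≤ 1/4 := by
    have hu : (0:ℝ) ≤ c/σ := by positivity
    have hA := aux_sup hu
    have hB := aux_quarter
    have hexp_eq : -((c/σ)^2)/2 = -c^2/(2*σ^2) := by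
      field_simp
    have hts : t * Real.sqrt (2*π) = (c/σ) * Real.exp (-((c/σ)^2)/2) := by
      rw [ht, hexp_eq]
      field_simp
    have key : t * Real.sqrt (2*π) ≤ Real.sqrt (2*π)/4 := by
      rw [hts]; exact le_trans hA hB
    nlinarith [key, hsqpos]
  have ht0 : 0 < t := by
    rw [ht]
    positivity
  have ha : 0 < p - δ := by linarith
  refine ⟨ha, hb, ?_⟩
  have hs0 : (0:ℝ) ≤ t - δ := by linarith
  have hs4 : t - δ ≤ 1/4 := by linarith
  have hx := aux_log_bound (x := 2*(t-δ)) (by linarith) (by linarith)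
  have hmono : Real.log ((1 + 2*(t-δ)) / (1 - 2*(t-δ))) ≤ Real.log ((p-δ)/(1-p)) := by
    have hr : (1 + 2*(t-δ)) / (1 - 2*(t-δ)) ≤ (p-δ)/(1-p) := by
      rw [div_le_div_iff₀ (by linarith) hb]
      have hb2 : 1 - p ≤ 1/2 - (t-δ) := by linarith
      have ha2 : 1/2 + (t-δ) ≤ p - δ := by linarith
      nlinarith [mul_le_mul_of_nonneg_left hb2 (show (0:ℝ) ≤ 1+2*(t-δ) by linarith),
        mul_le_mul_of_nonneg_right ha2 (show (0:ℝ) ≤ 1-2*(t-δ) by linarith)]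
    exact Real.log_le_log (div_pos (by linarith) (by linarith)) hr
  linarith [hx, hmono]
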